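/- Let (H →∂ G, ▷) be a crossed module. Let g₁₂, g₁₃, g₁₄, g₂₃, g₂₄, g₃₄ ∈ G and h₁₂₃, h₁₂₄, h₁₃₄, h₂₃₄ ∈ H. Assume: (1) g₁₂ = g₂₃⁻¹ ∂(h₁₂₃)⁻¹ g₁₃ (flatness of face 123); (2) h₁₃₄ (g₃₄ ▷ h₁₂₃) h₂₃₄⁻¹ h₁₂₄⁻¹ = 1 (flatness of tetrahedron 1234); (3) ∂(h₂₃₄) g₃₄ g₂₃ g₂₄⁻¹ = 1 (flatness of face 234); (4) ∂(h₁₃₄) g₃₄ g₁₃ g₁₄⁻¹ = 1 (flatness of face 134). Then ∂(h₁₂₄) g₂₄ g₁₂ g₁₄⁻¹ = 1 (flatness of face 124). -/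
import Mathlib


/-- A crossed module `(H --∂--> G, ▷)`: groups `G`, `H`, a group homomorphism
`δ : H →* G`, and a left action of `G` on `H` in which every `g : G` acts as a
group automorphism of `H` (encoded as `act : G →* MulAut H`), satisfying the
equivariance axiom and the Peiffer identity. -/
structure CrossedModule (G H : Type*) [Group G] [Group H] where
  δ : H →* G
  act : G →* MulAut H
  equivariance : ∀ (g : G) (h : H), δ (act g h) = g * δ h * g⁻¹
  peiffer : ∀ (h h' : H), act (δ h) h' = h * h' * h⁻¹

/-- Flatness of faces 123, 234, 134 and of the tetrahedron 1234 implies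
flatness of face 124. -/
theorem face124_flat {G H : Type*} [Group G] [Group H] (X : CrossedModule G H)
    (g₁₂ g₁₃ g₁₄ g₂₃ g₂₄ g₃₄ : G) (h₁₂₃ h₁₂₄ h₁₃₄ h₂₃₄ : H)
    (h1 : g₁₂ = g₂₃⁻¹ * (X.δ h₁₂₃)⁻¹ * g₁₃)
    (h2 : h₁₃₄ * X.act g₃₄ h₁₂₃ * h₂₃₄⁻¹ * h₁₂₄⁻¹ = 1)
    (h3 : X.δ h₂₃₄ * g₃₄ * g₂₃ * g₂₄⁻¹ = 1)
    (h4 : X.δ h₁₃₄ * g₃₄ * g₁₃ * g₁₄⁻¹ = 1) :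
    X.δ h₁₂₄ * g₂₄ * g₁₂ * g₁₄⁻¹ = 1 := by
  have e2 := congrArg X.δ h2
  simp only [map_mul, map_inv, map_one, X.equivariance] at e2
  have e14 : g₁₄ = X.δ h₁₃₄ * g₃₄ * g₁₃ := by
    have := mul_eq_one_iff_eq_inv.mp h4; simpa using this.symm
  have e24 : g₂₄ = X.δ h₂₃₄ * g₃₄ * g₂₃ := by
    have := mul_eq_one_iff_eq_inv.mp h3; simpa using this.symm
  have e124 : X.δ h₁₂₄ = X.δ h₁₃₄ * (g₃₄ * X.δ h₁₂₃ * g₃₄⁻¹) * (X.δ h₂₃₄)⁻¹ := by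
    have := mul_eq_one_iff_eq_inv.mp e2; simpa using this.symm
  rw [e124, e14, e24, h1]; group
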